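/- arXiv:1605.09676 — 2 statements merged into one kernel-verified Lean document; each statement's English description precedes it below -/
import Mathlib

section
/- Let a : ℝ → ℝ be continuous with a(x) ≥ a₀ > 0, and r : ℂ → ℂ globally Lipschitz. For each ε > 0 consider the differential equation ∂_s W̃(s) = Φ^ε(s, W̃(s)) in the Banach space L^∞_{τ,x} of bounded functions of (x,τ), where Φ^ε(s, w)(x,τ) = −(1/a(x̃)) e^{−iτ̃} r(e^{iτ̃} w(x,τ)) with x̃ = A⁻¹(A(x)+cs), τ̃ = τ + s/ε. Then for every bounded initial datum W̃(0) this equation has a unique global solution on [0, T̄], and there exists C > 0 depending only on T̄, a₀ and the Lipschitz data of r (in particular independent of ε) such that sup_{ε > 0} ‖W̃(s)‖_{L^∞_{τ,x}} ≤ C (1 + ‖W̃(0)‖_{L^∞_{τ,x}}) for all s ∈ [0, T̄]. -/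
open Set intervalIntegral Function

open Set intervalIntegral Function

lemma norm_intervalIntegral_le_pow {h : ℝ → ℂ} (hc : Continuous h) (t : ℝ) {c : ℝ} (n : ℕ)
    (hb : ∀ s ∈ Set.uIcc (0:ℝ) t, ‖h s‖ ≤ c * |s| ^ n) :
    ‖∫ s in (0:ℝ)..t, h s‖ ≤ c * |t| ^ (n + 1) / (n + 1) := by
  rcases le_total 0 t with h0 | h0
  · calc ‖∫ s in (0:ℝ)..t, h s‖ ≤ ∫ s in (0:ℝ)..t, ‖h s‖ :=
        intervalIntegral.norm_integral_le_integral_norm h0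
    _ ≤ ∫ s in (0:ℝ)..t, c * s ^ n := by
        apply intervalIntegral.integral_mono_on h0 (hc.norm.intervalIntegrable 0 t)
          ((continuous_const.mul (continuous_pow n)).intervalIntegrable 0 t)
        intro s hs
        have := hb s (by rw [Set.uIcc_of_le h0]; exact hs)
        rwa [abs_of_nonneg hs.1] at this
    _ = c * |t| ^ (n + 1) / (n + 1) := by
        rw [intervalIntegral.integral_const_mul, integral_pow, abs_of_nonneg h0]
        push_cast; ring
  · have h1 : ‖∫ s in (0:ℝ)..t, h s‖ = ‖∫ s in t..(0:ℝ), h s‖ := by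
      rw [intervalIntegral.integral_symm]; simp
    rw [h1]
    calc ‖∫ s in t..(0:ℝ), h s‖ ≤ ∫ s in t..(0:ℝ), ‖h s‖ :=
        intervalIntegral.norm_integral_le_integral_norm h0
    _ ≤ ∫ s in t..(0:ℝ), c * (-s) ^ n := by
        apply intervalIntegral.integral_mono_on h0 (hc.norm.intervalIntegrable t 0)
          ((continuous_const.mul ((continuous_neg).pow n)).intervalIntegrable t 0)
        intro s hs
        have := hb s (by rw [Set.uIcc_of_ge h0]; exact hs)
        rwa [abs_of_nonpos hs.2] at this
    _ = c * |t| ^ (n + 1) / (n + 1) := by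
        have : (∫ s in t..(0:ℝ), (-s) ^ n) = ∫ s in (0:ℝ)..(-t), s ^ n := by
          simpa using intervalIntegral.integral_comp_neg (a := t) (b := 0) (fun s => s ^ n)
        rw [intervalIntegral.integral_const_mul, this, integral_pow, abs_of_nonpos h0]
        push_cast; ring

lemma ode_global_exists {v : ℝ → ℂ → ℂ}
    (hv : Continuous fun p : ℝ × ℂ => v p.1 p.2)
    {K : NNReal} (hK : ∀ s, LipschitzWith K (v s)) (z₀ : ℂ) {T : ℝ} (hT : 0 < T) :
    ∃ α : ℝ → ℂ, α 0 = z₀ ∧ ∀ s ∈ Set.Icc (0:ℝ) T, HasDerivAt α (v s (α s)) s := by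
  have hle : (-1 : ℝ) ≤ T + 1 := by linarith
  set I := Set.Icc (-1 : ℝ) (T + 1) with hI
  let π : ℝ → I := Set.projIcc (-1) (T + 1) hle
  have hπ : Continuous π := continuous_projIcc
  -- the Picard operator
  have hgc : ∀ f : C(I, ℂ), Continuous fun s => v s ((f (π s) : ℂ)) := fun f =>
    hv.comp (continuous_id.prodMk (f.continuous.comp hπ))
  let P : C(I, ℂ) → C(I, ℂ) := fun f =>
    ⟨fun t => z₀ + ∫ s in (0:ℝ)..(t:ℝ), v s (f (π s)),
      (continuous_const.add (intervalIntegral.continuous_primitive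
        (fun a b => (hgc f).intervalIntegrable a b) 0)).comp continuous_subtype_val⟩
  have h0mem : (0:ℝ) ∈ I := by constructor <;> [linarith; linarith]
  have hmemI : ∀ (t : I) (s : ℝ), s ∈ Set.uIcc (0:ℝ) (t:ℝ) → s ∈ I := by
    intro t s hs
    have := Set.uIcc_subset_uIcc (Set.mem_uIcc_of_le ?_ ?_ : (0:ℝ) ∈ Set.uIcc (-1:ℝ) (T+1)) ?_ hs
    · rwa [Set.uIcc_of_le hle] at this
    · linarith
    · linarith
    · rw [Set.uIcc_of_le hle]; exact t.2
  -- key iterated estimate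
  have key : ∀ n : ℕ, ∀ f g : C(I, ℂ), ∀ t : I,
      dist ((P^[n] f) t) ((P^[n] g) t) ≤ (K:ℝ) ^ n * |(t:ℝ)| ^ n / n.factorial * dist f g := by
    intro n
    induction n with
    | zero => intro f g t; simpa using ContinuousMap.dist_apply_le_dist t
    | succ n ih =>
      intro f g t
      rw [Function.iterate_succ_apply', Function.iterate_succ_apply']
      set F := P^[n] f with hF
      set G := P^[n] g with hG
      have hint1 := (hgc F).intervalIntegrable (μ := MeasureTheory.volume) 0 (t:ℝ)
      have hint2 := (hgc G).intervalIntegrable (μ := MeasureTheory.volume) 0 (t:ℝ)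
      have hPF : (P F) t - (P G) t = ∫ s in (0:ℝ)..(t:ℝ),
          (v s (F (π s)) - v s (G (π s))) := by
        simp only [P, ContinuousMap.coe_mk]
        rw [intervalIntegral.integral_sub hint1 hint2]; ring
      rw [dist_eq_norm, hPF]
      have hb : ∀ s ∈ Set.uIcc (0:ℝ) (t:ℝ),
          ‖v s (F (π s)) - v s (G (π s))‖ ≤
            ((K:ℝ) ^ (n+1) / n.factorial * dist f g) * |s| ^ n := by
        intro s hs
        have hsI : s ∈ I := hmemI t s hs
        have hπs : π s = ⟨s, hsI⟩ := Set.projIcc_of_mem hle hsI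
        have h1 : dist (v s (F (π s))) (v s (G (π s))) ≤ K * dist (F (π s)) (G (π s)) :=
          (hK s).dist_le_mul _ _
        have h2 := ih f g (π s)
        rw [← hF, ← hG] at h2
        have hval : |((π s : ℝ))| = |s| := by rw [hπs]
        rw [← dist_eq_norm]
        calc dist (v s (F (π s))) (v s (G (π s))) ≤ K * dist (F (π s)) (G (π s)) := h1
        _ ≤ (K:ℝ) * ((K:ℝ) ^ n * |((π s : ℝ))| ^ n / n.factorial * dist f g) := by
            exact mul_le_mul_of_nonneg_left h2 K.coe_nonneg
        _ = ((K:ℝ) ^ (n+1) / n.factorial * dist f g) * |s| ^ n := by rw [hval]; ring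
      have := norm_intervalIntegral_le_pow ((hgc F).sub (hgc G)) (t:ℝ) n hb
      calc ‖∫ s in (0:ℝ)..(t:ℝ), (v s (F (π s)) - v s (G (π s)))‖
          ≤ ((K:ℝ) ^ (n+1) / n.factorial * dist f g) * |(t:ℝ)| ^ (n + 1) / (n + 1) := this
      _ = (K:ℝ) ^ (n+1) * |(t:ℝ)| ^ (n+1) / (n+1).factorial * dist f g := by
          rw [Nat.factorial_succ]; push_cast
          field_simp
  -- uniform distance bound for the iterates
  have habs : ∀ t : I, |(t:ℝ)| ≤ T + 1 := by
    intro t; rw [abs_le]; exact ⟨by linarith [t.2.1], t.2.2⟩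
  have hdist : ∀ (n : ℕ) (f g : C(I, ℂ)),
      dist (P^[n] f) (P^[n] g) ≤ ((K:ℝ) ^ n * (T+1) ^ n / n.factorial) * dist f g := by
    intro n f g
    have hC0 : (0:ℝ) ≤ ((K:ℝ) ^ n * (T+1) ^ n / n.factorial) * dist f g := by positivity
    rw [ContinuousMap.dist_le hC0]
    intro t
    calc dist ((P^[n] f) t) ((P^[n] g) t)
        ≤ (K:ℝ) ^ n * |(t:ℝ)| ^ n / n.factorial * dist f g := key n f g t
    _ ≤ (K:ℝ) ^ n * (T+1) ^ n / n.factorial * dist f g := by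
        gcongr
        exact habs t
  obtain ⟨n, hn⟩ : ∃ n : ℕ, (K:ℝ) ^ n * (T+1) ^ n / n.factorial < 1 := by
    have h := FloorSemiring.tendsto_pow_div_factorial_atTop ((K:ℝ) * (T+1))
    obtain ⟨n, hn⟩ := (h.eventually (gt_mem_nhds one_pos)).exists
    exact ⟨n, by rwa [mul_pow] at hn⟩
  have hq0 : (0:ℝ) ≤ (K:ℝ) ^ n * (T+1) ^ n / n.factorial := by positivity
  have hCW : ContractingWith ((K:ℝ) ^ n * (T+1) ^ n / n.factorial).toNNReal (P^[n]) := by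
    constructor
    · rwa [← NNReal.coe_lt_coe, Real.coe_toNNReal _ hq0, NNReal.coe_one]
    · apply LipschitzWith.of_dist_le_mul
      intro f g
      rw [Real.coe_toNNReal _ hq0]
      exact hdist n f g
  have hne : Nonempty C(I, ℂ) := ⟨ContinuousMap.const _ 0⟩
  set W := ContractingWith.fixedPoint (P^[n]) hCW with hWdef
  have hfix : P W = W := hCW.isFixedPt_fixedPoint_iterate
  set gW : ℝ → ℂ := fun s => v s (W (π s)) with hgWdef
  have hgWc : Continuous gW := hgc W
  refine ⟨fun t => z₀ + ∫ s in (0:ℝ)..t, gW s, by simp, ?_⟩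
  intro s hs
  have hsI : s ∈ I := ⟨by linarith [hs.1], by linarith [hs.2]⟩
  have hαW : ∀ u, u ∈ I → z₀ + (∫ x in (0:ℝ)..u, gW x) = W (π u) := by
    intro u hu
    have h2 := DFunLike.congr_fun hfix (π u)
    simp only [P, ContinuousMap.coe_mk] at h2
    have h3 : ((π u : ℝ)) = u := congrArg Subtype.val (Set.projIcc_of_mem hle hu)
    rw [← h2, h3]
  have hd : HasDerivAt (fun t => z₀ + ∫ u in (0:ℝ)..t, gW u) (gW s) s := by
    have h3 := intervalIntegral.integral_hasDerivAt_right (hgWc.intervalIntegrable 0 s)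
      hgWc.stronglyMeasurable.stronglyMeasurableAtFilter hgWc.continuousAt
    exact h3.const_add z₀
  have heq : z₀ + (∫ u in (0:ℝ)..s, gW u) = W (π s) := hαW s hsI
  have hvs : v s (z₀ + (∫ u in (0:ℝ)..s, gW u)) = gW s := by rw [heq]
  simpa [hvs] using hd

noncomputable def fld (r : ℂ → ℂ) (b θ : ℝ → ℝ) : ℝ → ℂ → ℂ := fun s z =>
  -(((b s)⁻¹ : ℝ) : ℂ) * Complex.exp (-(Complex.I * ((θ s : ℝ) : ℂ)))
    * r (Complex.exp (Complex.I * ((θ s : ℝ) : ℂ)) * z)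

lemma fld_norm_exp (x : ℝ) : ‖Complex.exp (Complex.I * (x : ℂ))‖ = 1 := by
  rw [Complex.norm_exp]; simp

lemma fld_norm_exp' (x : ℝ) : ‖Complex.exp (-(Complex.I * (x : ℂ)))‖ = 1 := by
  rw [Complex.norm_exp]; simp

lemma fld_lip {a₀ : ℝ} (ha₀ : 0 < a₀) {r : ℂ → ℂ} {L : NNReal} (hr : LipschitzWith L r)
    {b : ℝ → ℝ} (θ : ℝ → ℝ) (hblow : ∀ s, a₀ ≤ b s) (s : ℝ) :
    LipschitzWith ⟨(L : ℝ) / a₀, by positivity⟩ (fld r b θ s) := by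
  apply LipschitzWith.of_dist_le_mul
  intro z₁ z₂
  have hb0 : 0 < b s := lt_of_lt_of_le ha₀ (hblow s)
  rw [dist_eq_norm, dist_eq_norm]; change _ ≤ (L : ℝ) / a₀ * ‖z₁ - z₂‖
  have hdiff : fld r b θ s z₁ - fld r b θ s z₂
      = (-((((b s)⁻¹ : ℝ)) : ℂ) * Complex.exp (-(Complex.I * ((θ s : ℝ) : ℂ))))
        * (r (Complex.exp (Complex.I * ((θ s : ℝ) : ℂ)) * z₁)
           - r (Complex.exp (Complex.I * ((θ s : ℝ) : ℂ)) * z₂)) := by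
    simp only [fld]; ring
  rw [hdiff, norm_mul, norm_mul, norm_neg, Complex.norm_real, Real.norm_eq_abs,
    abs_of_nonneg (inv_nonneg.2 hb0.le), fld_norm_exp', mul_one]
  have h1 : ‖r (Complex.exp (Complex.I * ((θ s : ℝ) : ℂ)) * z₁)
      - r (Complex.exp (Complex.I * ((θ s : ℝ) : ℂ)) * z₂)‖ ≤ (L : ℝ) * ‖z₁ - z₂‖ := by
    have h2 := hr.dist_le_mul (Complex.exp (Complex.I * ((θ s : ℝ) : ℂ)) * z₁)
      (Complex.exp (Complex.I * ((θ s : ℝ) : ℂ)) * z₂)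
    rwa [dist_eq_norm, dist_eq_norm, ← mul_sub, norm_mul, fld_norm_exp, one_mul] at h2
  have hinv : (b s)⁻¹ ≤ a₀⁻¹ := inv_anti₀ ha₀ (hblow s)
  have h3 := mul_le_mul hinv h1 (norm_nonneg _) (inv_nonneg.2 ha₀.le)
  have h4 : a₀⁻¹ * ((L : ℝ) * ‖z₁ - z₂‖) = (L : ℝ) / a₀ * ‖z₁ - z₂‖ := by ring
  linarith

lemma fld_bound {a₀ : ℝ} (ha₀ : 0 < a₀) {r : ℂ → ℂ} {L : NNReal} (hr : LipschitzWith L r)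
    {b : ℝ → ℝ} (θ : ℝ → ℝ) (hblow : ∀ s, a₀ ≤ b s) (s : ℝ) (z : ℂ) :
    ‖fld r b θ s z‖ ≤ (L : ℝ) / a₀ * ‖z‖ + ‖r 0‖ / a₀ := by
  have hb0 : 0 < b s := lt_of_lt_of_le ha₀ (hblow s)
  have hnorm : ‖fld r b θ s z‖
      = (b s)⁻¹ * ‖r (Complex.exp (Complex.I * ((θ s : ℝ) : ℂ)) * z)‖ := by
    simp only [fld, norm_mul, norm_neg, Complex.norm_real, Real.norm_eq_abs,
      abs_of_nonneg (inv_nonneg.2 hb0.le), fld_norm_exp', mul_one]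
  have h2 := hr.dist_le_mul (Complex.exp (Complex.I * ((θ s : ℝ) : ℂ)) * z) 0
  rw [dist_eq_norm, dist_eq_norm, sub_zero, norm_mul, fld_norm_exp, one_mul] at h2
  have h5 := norm_add_le (r (Complex.exp (Complex.I * ((θ s : ℝ) : ℂ)) * z) - r 0) (r 0)
  rw [sub_add_cancel] at h5
  have h1 : ‖r (Complex.exp (Complex.I * ((θ s : ℝ) : ℂ)) * z)‖ ≤ (L : ℝ) * ‖z‖ + ‖r 0‖ := by
    linarith
  have hinv : (b s)⁻¹ ≤ a₀⁻¹ := inv_anti₀ ha₀ (hblow s)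
  have h3 := mul_le_mul hinv h1 (norm_nonneg _) (inv_nonneg.2 ha₀.le)
  have h4 : a₀⁻¹ * ((L : ℝ) * ‖z‖ + ‖r 0‖) = (L : ℝ) / a₀ * ‖z‖ + ‖r 0‖ / a₀ := by ring
  rw [hnorm]; linarith

lemma fld_cont {a₀ : ℝ} (ha₀ : 0 < a₀) {r : ℂ → ℂ} {L : NNReal} (hr : LipschitzWith L r)
    {b θ : ℝ → ℝ} (hb : Continuous b) (hblow : ∀ s, a₀ ≤ b s) (hθ : Continuous θ) :
    Continuous fun p : ℝ × ℂ => fld r b θ p.1 p.2 := by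
  unfold fld
  have hθc : Continuous fun p : ℝ × ℂ => ((θ p.1 : ℝ) : ℂ) :=
    Complex.continuous_ofReal.comp (hθ.comp continuous_fst)
  apply Continuous.mul
  · apply Continuous.mul
    · apply Continuous.neg
      exact Complex.continuous_ofReal.comp
        ((hb.comp continuous_fst).inv₀ fun p => ne_of_gt (lt_of_lt_of_le ha₀ (hblow p.1)))
    · exact Complex.continuous_exp.comp (continuous_const.mul hθc).neg
  · exact hr.continuous.comp ((Complex.continuous_exp.comp (continuous_const.mul hθc)).mul
      continuous_snd)

/-- well-posedness (existence, uniqueness) on `[0,T̄]` of the filtered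
profile equation `∂_s W̃ = Φ^ε(s,W̃)`, where
`Φ^ε(s,w)(x,τ) = -(1/a(x̃)) e^{-iτ̃} r(e^{iτ̃} w(x,τ))`, `x̃ = A⁻¹(A(x)+cs)`,
`τ̃ = τ + s/ε`, in the Banach space of bounded functions of `(x,τ)`, together with an
`ε`-uniform bound `‖W̃(s)‖ ≤ C (1 + ‖W̃(0)‖)`. -/
theorem filtered_profile_wellposed_uniform_bound
    (c a₀ T : ℝ) (hc : 0 < c) (ha₀ : 0 < a₀) (hT : 0 < T)
    (a : ℝ → ℝ) (ha : Continuous a) (halow : ∀ x, a₀ ≤ a x)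
    (r : ℂ → ℂ) (L : NNReal) (hr : LipschitzWith L r) :
    let A : ℝ → ℝ := fun x => ∫ y in (0:ℝ)..x, a y
    let Φ : ℝ → ℝ → (ℝ → ℝ → ℂ) → ℝ → ℝ → ℂ := fun ε s w x τ =>
      -((((a (Function.invFun A (A x + c * s)))⁻¹ : ℝ)) : ℂ)
        * Complex.exp (-(Complex.I * ((τ + s / ε : ℝ) : ℂ)))
        * r (Complex.exp (Complex.I * ((τ + s / ε : ℝ) : ℂ)) * w x τ)
    let Sol : ℝ → (ℝ → ℝ → ℂ) → (ℝ → ℝ → ℝ → ℂ) → Prop := fun ε W0 Wt =>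
      (∀ x τ : ℝ, Wt 0 x τ = W0 x τ) ∧
      (∀ x τ : ℝ, ∀ s ∈ Set.Icc (0:ℝ) T,
        HasDerivAt (fun s' => Wt s' x τ) (Φ ε s (Wt s) x τ) s) ∧
      (∀ s ∈ Set.Icc (0:ℝ) T, ∃ B : ℝ, ∀ x τ : ℝ, ‖Wt s x τ‖ ≤ B)
    ∃ C > 0, ∀ ε : ℝ, 0 < ε →
      ∀ W0 : ℝ → ℝ → ℂ, (∃ B : ℝ, ∀ x τ : ℝ, ‖W0 x τ‖ ≤ B) →
        -- existence of a global bounded solution on [0,T̄]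
        (∃ Wt, Sol ε W0 Wt) ∧
        -- uniqueness on [0,T̄]
        (∀ Wt₁ Wt₂, Sol ε W0 Wt₁ → Sol ε W0 Wt₂ →
          ∀ s ∈ Set.Icc (0:ℝ) T, ∀ x τ : ℝ, Wt₁ s x τ = Wt₂ s x τ) ∧
        -- ε-uniform L^∞ bound
        (∀ Wt, Sol ε W0 Wt → ∀ M : ℝ, (∀ x τ : ℝ, ‖W0 x τ‖ ≤ M) →
          ∀ s ∈ Set.Icc (0:ℝ) T, ∀ x τ : ℝ, ‖Wt s x τ‖ ≤ C * (1 + M)) := by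
  intro A Φ Sol
  have hapos : ∀ y, 0 < a y := fun y => lt_of_lt_of_le ha₀ (halow y)
  -- properties of A
  have hAderiv : ∀ x, HasDerivAt A (a x) x := fun x =>
    intervalIntegral.integral_hasDerivAt_right (ha.intervalIntegrable 0 x)
      ha.stronglyMeasurable.stronglyMeasurableAtFilter ha.continuousAt
  have hAcont : Continuous A := continuous_iff_continuousAt.2 fun x => (hAderiv x).continuousAt
  have hAmono : StrictMono A := by
    apply strictMono_of_deriv_pos
    intro x; rw [(hAderiv x).deriv]; exact hapos x
  have hlow1 : ∀ x : ℝ, 0 ≤ x → a₀ * x ≤ A x := by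
    intro x hx
    have h1 : (∫ _ in (0:ℝ)..x, a₀) ≤ ∫ y in (0:ℝ)..x, a y :=
      intervalIntegral.integral_mono_on hx (intervalIntegrable_const)
        (ha.intervalIntegrable 0 x) fun y _ => halow y
    simpa [intervalIntegral.integral_const, smul_eq_mul, mul_comm] using h1
  have hlow2 : ∀ x : ℝ, x ≤ 0 → A x ≤ a₀ * x := by
    intro x hx
    have h1 : (∫ _ in x..(0:ℝ), a₀) ≤ ∫ y in x..(0:ℝ), a y :=
      intervalIntegral.integral_mono_on hx (intervalIntegrable_const)
        (ha.intervalIntegrable x 0) fun y _ => halow y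
    have h2 : A x = -∫ y in x..(0:ℝ), a y := by
      rw [← intervalIntegral.integral_symm]
    rw [h2, intervalIntegral.integral_const, smul_eq_mul] at *
    nlinarith [h1]
  have hAtop : Filter.Tendsto A Filter.atTop Filter.atTop := by
    apply Filter.tendsto_atTop_mono' Filter.atTop _
      (Filter.Tendsto.const_mul_atTop ha₀ Filter.tendsto_id)
    filter_upwards [Filter.eventually_ge_atTop (0:ℝ)] with x hx using hlow1 x hx
  have hAbot : Filter.Tendsto A Filter.atBot Filter.atBot := by
    apply Filter.tendsto_atBot_mono' Filter.atBot _
      (Filter.Tendsto.const_mul_atBot ha₀ Filter.tendsto_id)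
    filter_upwards [Filter.eventually_le_atBot (0:ℝ)] with x hx using hlow2 x hx
  have hAsurj : Function.Surjective A := hAcont.surjective hAtop hAbot
  have hinj : Function.Injective A := hAmono.injective
  set e := StrictMono.orderIsoOfSurjective A hAmono hAsurj with he
  have hinvEq : Function.invFun A = fun y => e.symm y := by
    funext y
    have h1 : A (e.symm y) = y := e.apply_symm_apply y
    conv_lhs => rw [← h1]
    exact Function.leftInverse_invFun hinj _
  have hinvc : Continuous (Function.invFun A) := by
    rw [hinvEq]; exact OrderIso.continuous e.symm
  -- constants
  set Kr : ℝ := (L : ℝ) / a₀ + 1 with hKrdef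
  have hKrpos : 0 < Kr := by positivity
  set ρ : ℝ := ‖r 0‖ / a₀ with hρdef
  have hρ0 : 0 ≤ ρ := by positivity
  refine ⟨Real.exp (Kr * T) * (1 + ρ / Kr), by positivity, ?_⟩
  intro ε hε W0 hW0b
  set K₀ : NNReal := ⟨(L : ℝ) / a₀, by positivity⟩ with hK₀def
  set v : ℝ → ℝ → ℝ → ℂ → ℂ := fun x τ =>
    fld r (fun s => a (Function.invFun A (A x + c * s))) (fun s => τ + s / ε) with hvdef
  have hΦv : ∀ (s : ℝ) (w : ℝ → ℝ → ℂ) (x τ : ℝ), Φ ε s w x τ = v x τ s (w x τ) :=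
    fun _ _ _ _ => rfl
  have hblow : ∀ x s, a₀ ≤ a (Function.invFun A (A x + c * s)) := fun x s => halow _
  have hvlip : ∀ x τ s, LipschitzWith K₀ (v x τ s) := fun x τ s =>
    fld_lip ha₀ hr _ (hblow x) s
  have hvcont : ∀ x τ, Continuous fun p : ℝ × ℂ => v x τ p.1 p.2 := fun x τ =>
    fld_cont ha₀ hr
      (ha.comp (hinvc.comp (continuous_const.add (continuous_const.mul continuous_id))))
      (hblow x) (continuous_const.add (continuous_id.div_const ε))
  have hvbound : ∀ x τ s z, ‖v x τ s z‖ ≤ Kr * ‖z‖ + ρ := by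
    intro x τ s z
    have h1 := fld_bound ha₀ hr (fun s => τ + s / ε) (hblow x) s z
    have h2 : (L : ℝ) / a₀ * ‖z‖ ≤ Kr * ‖z‖ := by
      apply mul_le_mul_of_nonneg_right _ (norm_nonneg z)
      rw [hKrdef]; linarith
    calc ‖v x τ s z‖ ≤ (L : ℝ) / a₀ * ‖z‖ + ‖r 0‖ / a₀ := h1
    _ ≤ Kr * ‖z‖ + ρ := by rw [hρdef]; linarith
  -- pointwise Gronwall estimate
  have gron : ∀ (x τ : ℝ) (α : ℝ → ℂ) (M : ℝ), ‖α 0‖ ≤ M →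
      (∀ u ∈ Set.Icc (0:ℝ) T, HasDerivAt α (v x τ u (α u)) u) →
      ∀ s ∈ Set.Icc (0:ℝ) T, ‖α s‖ ≤ Real.exp (Kr * T) * (1 + ρ / Kr) * (1 + M) := by
    intro x τ α M hM hder s hsmem
    have hM0 : (0:ℝ) ≤ M := le_trans (norm_nonneg _) hM
    have hcont : ContinuousOn α (Set.Icc 0 T) := fun u hu =>
      (hder u hu).continuousAt.continuousWithinAt
    have h := norm_le_gronwallBound_of_norm_deriv_right_le (f' := fun u => v x τ u (α u))
      hcont (fun u hu => (hder u (Set.Ico_subset_Icc_self hu)).hasDerivWithinAt)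
      hM (fun u _ => hvbound x τ u (α u)) s hsmem
    rw [gronwallBound_of_K_ne_0 (ne_of_gt hKrpos)] at h
    have heS : Real.exp (Kr * (s - 0)) ≤ Real.exp (Kr * T) := by
      apply Real.exp_le_exp.2
      have h1 := hsmem.2
      nlinarith
    have heT1 : (1:ℝ) ≤ Real.exp (Kr * T) := by
      rw [← Real.exp_zero]
      apply Real.exp_le_exp.2
      positivity
    have hq : (0:ℝ) ≤ ρ / Kr := by positivity
    have hMeS : M * Real.exp (Kr * (s - 0)) ≤ M * Real.exp (Kr * T) :=
      mul_le_mul_of_nonneg_left heS hM0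
    have hqeS : ρ / Kr * Real.exp (Kr * (s - 0)) ≤ ρ / Kr * Real.exp (Kr * T) :=
      mul_le_mul_of_nonneg_left heS hq
    nlinarith [mul_nonneg (mul_nonneg (Real.exp_pos (Kr * T)).le hq) hM0,
      Real.exp_pos (Kr * T)]
  -- global existence pointwise in (x, τ)
  have hex : ∀ x τ : ℝ, ∃ α : ℝ → ℂ, α 0 = W0 x τ ∧
      ∀ s ∈ Set.Icc (0:ℝ) T, HasDerivAt α (v x τ s (α s)) s :=
    fun x τ => ode_global_exists (hvcont x τ) (hvlip x τ) (W0 x τ) hT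
  choose α hα0 hαd using hex
  refine ⟨?_, ?_, ?_⟩
  · -- existence
    refine ⟨fun s x τ => α x τ s, fun x τ => hα0 x τ, fun x τ s hs => hαd x τ s hs, ?_⟩
    intro s hs
    obtain ⟨B, hB⟩ := hW0b
    exact ⟨Real.exp (Kr * T) * (1 + ρ / Kr) * (1 + B), fun x τ =>
      gron x τ (α x τ) B (by rw [hα0]; exact hB x τ) (hαd x τ) s hs⟩
  · -- uniqueness
    intro Wt₁ Wt₂ h₁ h₂ s hs x τ
    obtain ⟨h₁0, h₁d, -⟩ := h₁
    obtain ⟨h₂0, h₂d, -⟩ := h₂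
    have hu := ODE_solution_unique (v := v x τ) (K := K₀)
      (f := fun s => Wt₁ s x τ) (g := fun s => Wt₂ s x τ) (a := 0) (b := T)
      (fun t => hvlip x τ t)
      (fun t ht => (h₁d x τ t ht).continuousAt.continuousWithinAt)
      (fun t ht => (h₁d x τ t (Set.Ico_subset_Icc_self ht)).hasDerivWithinAt)
      (fun t ht => (h₂d x τ t ht).continuousAt.continuousWithinAt)
      (fun t ht => (h₂d x τ t (Set.Ico_subset_Icc_self ht)).hasDerivWithinAt)
      (by simp [h₁0 x τ, h₂0 x τ])
    exact hu hs
  · -- uniform bound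
    intro Wt hW M hM s hs x τ
    obtain ⟨hW0, hWd, -⟩ := hW
    exact gron x τ (fun s => Wt s x τ) M (by show ‖Wt 0 x τ‖ ≤ M; rw [hW0 x τ]; exact hM x τ)
      (fun t ht => hWd x τ t ht) s hs
end

section
/- Let d ≥ 1, U, E : ℝ^d → ℝ be C¹ (with E real valued), b^i, b^± : ℝ^d × ℝ^d → ℂ continuous, ε > 0. Suppose S ∈ C¹ solves ∂_t S + p·∇_x S + ∇_x U·∇_p S = 2E with S(0,x,p) = 0, and (F⁺, F⁻, G^i)(t,x,p,τ), C¹ and 2π-periodic in τ, solve: ∂_t F⁺ + p·∇_x F⁺ − ∇_x(U+E)·∇_p F⁺ = −(𝓔⁺/ε) ∂_τ F⁺ + b̄^i e^{−iτ} G^i + b^i e^{iτ} Ḡ^i; ∂_t F⁻ + p·∇_x F⁻ − ∇_x(U−E)·∇_p F⁻ = −(𝓔⁻/ε) ∂_τ F⁻ − b̄^i e^{−iτ} G^i − b^i e^{iτ} Ḡ^i; ∂_t G^i + p·∇_x G^i + ∇_x U·∇_p G^i = −(2E/ε) ∂_τ G^i + b^i e^{iτ}(F⁻ − F⁺) + (b⁺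 − b⁻) G^i, where 𝓔^± = 2E − ∇_x(2U ± E)·∇_p S, and with F^±(0,x,p,0) = f^±_{in}(x,p), G^i(0,x,p,0) = f^i_{in}(x,p). Then f^±(t,x,p) := F^±(t,x,p,S(t,x,p)/ε) and f^i(t,x,p) := e^{−iS(t,x,p)/ε} G^i(t,x,p,S(t,x,p)/ε) solve the surface hopping system ∂_t f⁺ + p·∇_x f⁺ − ∇_x(U+E)·∇_p f⁺ = b̄^i f^i + b^i f̄^i; ∂_t f⁻ + p·∇_x f⁻ − ∇_x(U−E)·∇_p f⁻ = −b̄^i f^i − b^i f̄^i; ∂_t f^i + p·∇_x f^i + ∇_x U·∇_p f^i = −(2iE/ε) f^i + b^i (f⁻ − f⁺) + (b⁺ − b⁻) f^i, with the given initial data. -/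
open RealInnerProductSpace ComplexConjugate

section ChainAux

variable {E : Type*} [NormedAddCommGroup E] [NormedSpace ℝ E]

/-- Partials of `S` are differentiable. -/
lemma ngoSH_diff_t (S : ℝ → E → E → ℝ)
    (hS : ContDiff ℝ 1 (fun q : ℝ × E × E => S q.1 q.2.1 q.2.2)) (t : ℝ) (x p : E) :
    DifferentiableAt ℝ (fun t' => S t' x p) t := by
  have := ((hS.differentiable one_ne_zero) (t, x, p)).comp (f := fun t' => ((t', x, p) : ℝ × E × E)) t
    (differentiableAt_fun_id.prodMk (differentiableAt_const (x, p)))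
  exact this

lemma ngoSH_diff_x (S : ℝ → E → E → ℝ)
    (hS : ContDiff ℝ 1 (fun q : ℝ × E × E => S q.1 q.2.1 q.2.2)) (t : ℝ) (x p : E) :
    DifferentiableAt ℝ (fun x' => S t x' p) x := by
  have := ((hS.differentiable one_ne_zero) (t, x, p)).comp (f := fun x' => ((t, x', p) : ℝ × E × E)) x
    ((differentiableAt_const t).prodMk (differentiableAt_fun_id.prodMk (differentiableAt_const p)))
  exact this

lemma ngoSH_diff_p (S : ℝ → E → E → ℝ)
    (hS : ContDiff ℝ 1 (fun q : ℝ × E × E => S q.1 q.2.1 q.2.2)) (t : ℝ) (x p : E) :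
    DifferentiableAt ℝ (fun p' => S t x p') p := by
  have := ((hS.differentiable one_ne_zero) (t, x, p)).comp (f := fun p' => ((t, x, p') : ℝ × E × E)) p
    ((differentiableAt_const t).prodMk ((differentiableAt_const x).prodMk differentiableAt_fun_id))
  exact this

/-- Differentiability of partial maps of a jointly `C¹` profile. -/
lemma ngoSH_diffF_t (Φ : ℝ → E → E → ℝ → ℂ)
    (hΦ : ContDiff ℝ 1 (fun q : ℝ × E × E × ℝ => Φ q.1 q.2.1 q.2.2.1 q.2.2.2))
    (t : ℝ) (x p : E) (τ : ℝ) :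
    DifferentiableAt ℝ (fun t' => Φ t' x p τ) t := by
  have := ((hΦ.differentiable one_ne_zero) (t, x, p, τ)).comp (f := fun t' => ((t', x, p, τ) : ℝ × E × E × ℝ)) t
    (differentiableAt_fun_id.prodMk (differentiableAt_const (x, p, τ)))
  exact this

lemma ngoSH_diffF_x (Φ : ℝ → E → E → ℝ → ℂ)
    (hΦ : ContDiff ℝ 1 (fun q : ℝ × E × E × ℝ => Φ q.1 q.2.1 q.2.2.1 q.2.2.2))
    (t : ℝ) (x p : E) (τ : ℝ) :
    DifferentiableAt ℝ (fun x' => Φ t x' p τ) x := by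
  have := ((hΦ.differentiable one_ne_zero) (t, x, p, τ)).comp (f := fun x' => ((t, x', p, τ) : ℝ × E × E × ℝ)) x
    ((differentiableAt_const t).prodMk (differentiableAt_fun_id.prodMk (differentiableAt_const (p, τ))))
  exact this

lemma ngoSH_diffF_tau (Φ : ℝ → E → E → ℝ → ℂ)
    (hΦ : ContDiff ℝ 1 (fun q : ℝ × E × E × ℝ => Φ q.1 q.2.1 q.2.2.1 q.2.2.2))
    (t : ℝ) (x p : E) (τ : ℝ) :
    DifferentiableAt ℝ (fun τ' => Φ t x p τ') τ := by
  have := ((hΦ.differentiable one_ne_zero) (t, x, p, τ)).comp (f := fun τ' => ((t, x, p, τ') : ℝ × E × E × ℝ)) τ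
    ((differentiableAt_const t).prodMk ((differentiableAt_const x).prodMk
      ((differentiableAt_const p).prodMk differentiableAt_fun_id)))
  exact this

/-- Chain rule in `t` for `Φ(t,x,p,S(t,x,p)/ε)`. -/
lemma ngoSH_chain_t (Φ : ℝ → E → E → ℝ → ℂ)
    (hΦ : ContDiff ℝ 1 (fun q : ℝ × E × E × ℝ => Φ q.1 q.2.1 q.2.2.1 q.2.2.2))
    (S : ℝ → E → E → ℝ)
    (hS : ContDiff ℝ 1 (fun q : ℝ × E × E => S q.1 q.2.1 q.2.2))
    (ε t : ℝ) (x p : E) :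
    deriv (fun t' => Φ t' x p (S t' x p / ε)) t
      = deriv (fun t' => Φ t' x p (S t x p / ε)) t
        + ((deriv (fun t' => S t' x p) t / ε : ℝ) : ℂ)
          * deriv (fun τ' => Φ t x p τ') (S t x p / ε) := by
  set τ := S t x p / ε with hτ
  have hD : HasFDerivAt (fun q : ℝ × E × E × ℝ => Φ q.1 q.2.1 q.2.2.1 q.2.2.2)
      (fderiv ℝ (fun q : ℝ × E × E × ℝ => Φ q.1 q.2.1 q.2.2.1 q.2.2.2) (t, x, p, τ))
      (t, x, p, τ) := ((hΦ.differentiable one_ne_zero) (t, x, p, τ)).hasFDerivAt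
  set D := fderiv ℝ (fun q : ℝ × E × E × ℝ => Φ q.1 q.2.1 q.2.2.1 q.2.2.2) (t, x, p, τ) with hDdef
  have hst : HasDerivAt (fun t' => S t' x p) (deriv (fun t' => S t' x p) t) t :=
    (ngoSH_diff_t S hS t x p).hasDerivAt
  have hc : HasDerivAt (fun t' => ((t', x, p, S t' x p / ε) : ℝ × E × E × ℝ))
      (1, 0, 0, deriv (fun t' => S t' x p) t / ε) t :=
    (hasDerivAt_id t).prodMk ((hasDerivAt_const t x).prodMk
      ((hasDerivAt_const t p).prodMk (hst.div_const ε)))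
  have h1 : deriv (fun t' => Φ t' x p (S t' x p / ε)) t
      = D (1, 0, 0, deriv (fun t' => S t' x p) t / ε) := by
    have := (hD.comp_hasDerivAt t hc).deriv
    exact this
  have hc2 : HasDerivAt (fun t' => ((t', x, p, τ) : ℝ × E × E × ℝ)) (1, 0, 0, 0) t :=
    (hasDerivAt_id t).prodMk ((hasDerivAt_const t x).prodMk
      ((hasDerivAt_const t p).prodMk (hasDerivAt_const t τ)))
  have h2 : deriv (fun t' => Φ t' x p τ) t = D (1, 0, 0, 0) := by
    have := (hD.comp_hasDerivAt t hc2).deriv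
    exact this
  have hc3 : HasDerivAt (fun τ' => ((t, x, p, τ') : ℝ × E × E × ℝ)) (0, 0, 0, 1) τ :=
    (hasDerivAt_const τ t).prodMk ((hasDerivAt_const τ x).prodMk
      ((hasDerivAt_const τ p).prodMk (hasDerivAt_id τ)))
  have h3 : deriv (fun τ' => Φ t x p τ') τ = D (0, 0, 0, 1) := by
    have := (hD.comp_hasDerivAt τ hc3).deriv
    exact this
  rw [h1, h2, h3]
  have hsplit : ((1 : ℝ), (0 : E), (0 : E), deriv (fun t' => S t' x p) t / ε)
      = ((1 : ℝ), (0 : E), (0 : E), (0 : ℝ))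
        + (deriv (fun t' => S t' x p) t / ε) • ((0 : ℝ), (0 : E), (0 : E), (1 : ℝ)) := by
    simp [Prod.ext_iff]
  rw [hsplit, map_add, map_smul, Complex.real_smul]




lemma ngoSH_chain_x (Φ : ℝ → E → E → ℝ → ℂ)
    (hΦ : ContDiff ℝ 1 (fun q : ℝ × E × E × ℝ => Φ q.1 q.2.1 q.2.2.1 q.2.2.2))
    (S : ℝ → E → E → ℝ)
    (hS : ContDiff ℝ 1 (fun q : ℝ × E × E => S q.1 q.2.1 q.2.2))
    (ε t : ℝ) (x p : E) (v : E)
    (hSx : DifferentiableAt ℝ (fun x' => S t x' p) x) :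
    fderiv ℝ (fun x' => Φ t x' p (S t x' p / ε)) x v
      = fderiv ℝ (fun x' => Φ t x' p (S t x p / ε)) x v
        + ((fderiv ℝ (fun x' => S t x' p) x v / ε : ℝ) : ℂ)
          * deriv (fun τ' => Φ t x p τ') (S t x p / ε) := by
  set τ := S t x p / ε with hτ
  have hD : HasFDerivAt (fun q : ℝ × E × E × ℝ => Φ q.1 q.2.1 q.2.2.1 q.2.2.2)
      (fderiv ℝ (fun q : ℝ × E × E × ℝ => Φ q.1 q.2.1 q.2.2.1 q.2.2.2) (t, x, p, τ))
      (t, x, p, τ) := ((hΦ.differentiable one_ne_zero) (t, x, p, τ)).hasFDerivAt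
  set D := fderiv ℝ (fun q : ℝ × E × E × ℝ => Φ q.1 q.2.1 q.2.2.1 q.2.2.2) (t, x, p, τ) with hDdef
  have hdiv : HasFDerivAt (fun x' => S t x' p / ε)
      (ε⁻¹ • fderiv ℝ (fun x' => S t x' p) x) x := by
    simpa only [Pi.smul_def, smul_eq_mul, div_eq_inv_mul] using hSx.hasFDerivAt.const_smul ε⁻¹
  have hc : HasFDerivAt (fun x' => ((t, x', p, S t x' p / ε) : ℝ × E × E × ℝ))
      ((0 : E →L[ℝ] ℝ).prod ((ContinuousLinearMap.id ℝ E).prod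
        ((0 : E →L[ℝ] E).prod (ε⁻¹ • fderiv ℝ (fun x' => S t x' p) x)))) x :=
    (hasFDerivAt_const t x).prodMk ((hasFDerivAt_id x).prodMk ((hasFDerivAt_const p x).prodMk hdiv))
  have h1 : fderiv ℝ (fun x' => Φ t x' p (S t x' p / ε)) x
      = D.comp ((0 : E →L[ℝ] ℝ).prod ((ContinuousLinearMap.id ℝ E).prod
          ((0 : E →L[ℝ] E).prod (ε⁻¹ • fderiv ℝ (fun x' => S t x' p) x)))) := by
    have := (hD.comp x hc).fderiv
    exact this
  have hc2 : HasFDerivAt (fun x' => ((t, x', p, τ) : ℝ × E × E × ℝ))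
      ((0 : E →L[ℝ] ℝ).prod ((ContinuousLinearMap.id ℝ E).prod
        ((0 : E →L[ℝ] E).prod (0 : E →L[ℝ] ℝ)))) x :=
    (hasFDerivAt_const t x).prodMk ((hasFDerivAt_id x).prodMk
      ((hasFDerivAt_const p x).prodMk (hasFDerivAt_const τ x)))
  have h2 : fderiv ℝ (fun x' => Φ t x' p τ) x
      = D.comp ((0 : E →L[ℝ] ℝ).prod ((ContinuousLinearMap.id ℝ E).prod
          ((0 : E →L[ℝ] E).prod (0 : E →L[ℝ] ℝ)))) := by
    have := (hD.comp x hc2).fderiv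
    exact this
  have hc3 : HasDerivAt (fun τ' => ((t, x, p, τ') : ℝ × E × E × ℝ)) (0, 0, 0, 1) τ :=
    (hasDerivAt_const τ t).prodMk ((hasDerivAt_const τ x).prodMk
      ((hasDerivAt_const τ p).prodMk (hasDerivAt_id τ)))
  have h3 : deriv (fun τ' => Φ t x p τ') τ = D (0, 0, 0, 1) := by
    have := (hD.comp_hasDerivAt τ hc3).deriv
    exact this
  rw [h1, h2, h3]
  simp only [ContinuousLinearMap.coe_comp', Function.comp_apply,
    ContinuousLinearMap.prod_apply, ContinuousLinearMap.id_apply,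
    ContinuousLinearMap.zero_apply, ContinuousLinearMap.smul_apply, smul_eq_mul]
  have hsplit : ((0 : ℝ), v, (0 : E), ε⁻¹ * fderiv ℝ (fun x' => S t x' p) x v)
      = ((0 : ℝ), v, (0 : E), (0 : ℝ))
        + (fderiv ℝ (fun x' => S t x' p) x v / ε) • ((0 : ℝ), (0 : E), (0 : E), (1 : ℝ)) := by
    simp [Prod.ext_iff, div_eq_inv_mul]
  rw [hsplit, map_add, map_smul, Complex.real_smul]

lemma ngoSH_chain_p (Φ : ℝ → E → E → ℝ → ℂ)
    (hΦ : ContDiff ℝ 1 (fun q : ℝ × E × E × ℝ => Φ q.1 q.2.1 q.2.2.1 q.2.2.2))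
    (S : ℝ → E → E → ℝ)
    (hS : ContDiff ℝ 1 (fun q : ℝ × E × E => S q.1 q.2.1 q.2.2))
    (ε t : ℝ) (x p : E) (v : E)
    (hSp : DifferentiableAt ℝ (fun p' => S t x p') p) :
    fderiv ℝ (fun p' => Φ t x p' (S t x p' / ε)) p v
      = fderiv ℝ (fun p' => Φ t x p' (S t x p / ε)) p v
        + ((fderiv ℝ (fun p' => S t x p') p v / ε : ℝ) : ℂ)
          * deriv (fun τ' => Φ t x p τ') (S t x p / ε) := by
  set τ := S t x p / ε with hτ
  have hD : HasFDerivAt (fun q : ℝ × E × E × ℝ => Φ q.1 q.2.1 q.2.2.1 q.2.2.2)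
      (fderiv ℝ (fun q : ℝ × E × E × ℝ => Φ q.1 q.2.1 q.2.2.1 q.2.2.2) (t, x, p, τ))
      (t, x, p, τ) := ((hΦ.differentiable one_ne_zero) (t, x, p, τ)).hasFDerivAt
  set D := fderiv ℝ (fun q : ℝ × E × E × ℝ => Φ q.1 q.2.1 q.2.2.1 q.2.2.2) (t, x, p, τ) with hDdef
  have hdiv : HasFDerivAt (fun p' => S t x p' / ε)
      (ε⁻¹ • fderiv ℝ (fun p' => S t x p') p) p := by
    simpa only [Pi.smul_def, smul_eq_mul, div_eq_inv_mul] using hSp.hasFDerivAt.const_smul ε⁻¹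
  have hc : HasFDerivAt (fun p' => ((t, x, p', S t x p' / ε) : ℝ × E × E × ℝ))
      ((0 : E →L[ℝ] ℝ).prod ((0 : E →L[ℝ] E).prod
        ((ContinuousLinearMap.id ℝ E).prod (ε⁻¹ • fderiv ℝ (fun p' => S t x p') p)))) p :=
    (hasFDerivAt_const t p).prodMk ((hasFDerivAt_const x p).prodMk ((hasFDerivAt_id p).prodMk hdiv))
  have h1 : fderiv ℝ (fun p' => Φ t x p' (S t x p' / ε)) p
      = D.comp ((0 : E →L[ℝ] ℝ).prod ((0 : E →L[ℝ] E).prod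
          ((ContinuousLinearMap.id ℝ E).prod (ε⁻¹ • fderiv ℝ (fun p' => S t x p') p)))) := by
    have := (hD.comp p hc).fderiv
    exact this
  have hc2 : HasFDerivAt (fun p' => ((t, x, p', τ) : ℝ × E × E × ℝ))
      ((0 : E →L[ℝ] ℝ).prod ((0 : E →L[ℝ] E).prod
        ((ContinuousLinearMap.id ℝ E).prod (0 : E →L[ℝ] ℝ)))) p :=
    (hasFDerivAt_const t p).prodMk ((hasFDerivAt_const x p).prodMk
      ((hasFDerivAt_id p).prodMk (hasFDerivAt_const τ p)))
  have h2 : fderiv ℝ (fun p' => Φ t x p' τ) p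
      = D.comp ((0 : E →L[ℝ] ℝ).prod ((0 : E →L[ℝ] E).prod
          ((ContinuousLinearMap.id ℝ E).prod (0 : E →L[ℝ] ℝ)))) := by
    have := (hD.comp p hc2).fderiv
    exact this
  have hc3 : HasDerivAt (fun τ' => ((t, x, p, τ') : ℝ × E × E × ℝ)) (0, 0, 0, 1) τ :=
    (hasDerivAt_const τ t).prodMk ((hasDerivAt_const τ x).prodMk
      ((hasDerivAt_const τ p).prodMk (hasDerivAt_id τ)))
  have h3 : deriv (fun τ' => Φ t x p τ') τ = D (0, 0, 0, 1) := by
    have := (hD.comp_hasDerivAt τ hc3).deriv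
    exact this
  rw [h1, h2, h3]
  simp only [ContinuousLinearMap.coe_comp', Function.comp_apply,
    ContinuousLinearMap.prod_apply, ContinuousLinearMap.id_apply,
    ContinuousLinearMap.zero_apply, ContinuousLinearMap.smul_apply, smul_eq_mul]
  have hsplit : ((0 : ℝ), (0 : E), v, ε⁻¹ * fderiv ℝ (fun p' => S t x p') p v)
      = ((0 : ℝ), (0 : E), v, (0 : ℝ))
        + (fderiv ℝ (fun p' => S t x p') p v / ε) • ((0 : ℝ), (0 : E), (0 : E), (1 : ℝ)) := by
    simp [Prod.ext_iff, div_eq_inv_mul]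
  rw [hsplit, map_add, map_smul, Complex.real_smul]




lemma ngoSH_fderiv_inner {F : Type*} [NormedAddCommGroup F] [InnerProductSpace ℝ F]
    [CompleteSpace F] (f : F → ℝ) (x v : F) :
    fderiv ℝ f x v = ⟪gradient f x, v⟫ := by
  rw [← InnerProductSpace.toDual_apply_apply, gradient, LinearIsometryEquiv.apply_symm_apply]


lemma ngoSH_phase_contDiff (Gi : ℝ → E → E → ℝ → ℂ)
    (hGi : ContDiff ℝ 1 (fun q : ℝ × E × E × ℝ => Gi q.1 q.2.1 q.2.2.1 q.2.2.2)) :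
    ContDiff ℝ 1 (fun q : ℝ × E × E × ℝ =>
      Complex.exp (-(Complex.I * ((q.2.2.2 : ℝ) : ℂ))) * Gi q.1 q.2.1 q.2.2.1 q.2.2.2) := by
  have h1 : ContDiff ℝ 1 (fun q : ℝ × E × E × ℝ => ((q.2.2.2 : ℝ) : ℂ)) :=
    Complex.ofRealCLM.contDiff.comp (contDiff_snd.comp (contDiff_snd.comp contDiff_snd))
  have hexp : ContDiff ℝ 1 (Complex.exp) :=
    Complex.contDiff_exp
  exact ((hexp.comp ((contDiff_const.mul h1).neg)).mul hGi)

lemma ngoSH_phase_deriv_t (Gi : ℝ → E → E → ℝ → ℂ)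
    (hGi : ContDiff ℝ 1 (fun q : ℝ × E × E × ℝ => Gi q.1 q.2.1 q.2.2.1 q.2.2.2))
    (t : ℝ) (x p : E) (τ : ℝ) :
    deriv (fun t' => Complex.exp (-(Complex.I * (τ : ℂ))) * Gi t' x p τ) t
      = Complex.exp (-(Complex.I * (τ : ℂ))) * deriv (fun t' => Gi t' x p τ) t :=
  deriv_const_mul _ (by
    have := ((hGi.differentiable one_ne_zero) (t, x, p, τ)).comp (f := fun t' => ((t', x, p, τ) : ℝ × E × E × ℝ)) t
      (differentiableAt_fun_id.prodMk (differentiableAt_const (x, p, τ)))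
    exact this)

lemma ngoSH_phase_fderiv_x (Gi : ℝ → E → E → ℝ → ℂ)
    (hGi : ContDiff ℝ 1 (fun q : ℝ × E × E × ℝ => Gi q.1 q.2.1 q.2.2.1 q.2.2.2))
    (t : ℝ) (x p : E) (τ : ℝ) (v : E) :
    fderiv ℝ (fun x' => Complex.exp (-(Complex.I * (τ : ℂ))) * Gi t x' p τ) x v
      = Complex.exp (-(Complex.I * (τ : ℂ))) * fderiv ℝ (fun x' => Gi t x' p τ) x v := by
  have hd : DifferentiableAt ℝ (fun x' => Gi t x' p τ) x := by
    have := ((hGi.differentiable one_ne_zero) (t, x, p, τ)).comp (f := fun x' => ((t, x', p, τ) : ℝ × E × E × ℝ)) x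
      ((differentiableAt_const t).prodMk (differentiableAt_fun_id.prodMk
        (differentiableAt_const (p, τ))))
    exact this
  rw [fderiv_const_mul hd]
  simp

lemma ngoSH_phase_fderiv_p (Gi : ℝ → E → E → ℝ → ℂ)
    (hGi : ContDiff ℝ 1 (fun q : ℝ × E × E × ℝ => Gi q.1 q.2.1 q.2.2.1 q.2.2.2))
    (t : ℝ) (x p : E) (τ : ℝ) (v : E) :
    fderiv ℝ (fun p' => Complex.exp (-(Complex.I * (τ : ℂ))) * Gi t x p' τ) p v
      = Complex.exp (-(Complex.I * (τ : ℂ))) * fderiv ℝ (fun p' => Gi t x p' τ) p v := by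
  have hd : DifferentiableAt ℝ (fun p' => Gi t x p' τ) p := by
    have := ((hGi.differentiable one_ne_zero) (t, x, p, τ)).comp (f := fun p' => ((t, x, p', τ) : ℝ × E × E × ℝ)) p
      ((differentiableAt_const t).prodMk ((differentiableAt_const x).prodMk
        (differentiableAt_fun_id.prodMk (differentiableAt_const τ))))
    exact this
  rw [fderiv_const_mul hd]
  simp

lemma ngoSH_phase_deriv_tau (Gi : ℝ → E → E → ℝ → ℂ)
    (hGi : ContDiff ℝ 1 (fun q : ℝ × E × E × ℝ => Gi q.1 q.2.1 q.2.2.1 q.2.2.2))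
    (t : ℝ) (x p : E) (τ : ℝ) :
    deriv (fun τ' : ℝ => Complex.exp (-(Complex.I * ((τ' : ℝ) : ℂ))) * Gi t x p τ') τ
      = Complex.exp (-(Complex.I * (τ : ℂ))) * (-Complex.I) * Gi t x p τ
        + Complex.exp (-(Complex.I * (τ : ℂ))) * deriv (fun τ' => Gi t x p τ') τ := by
  have hph : HasDerivAt (fun τ' : ℝ => Complex.exp (-(Complex.I * ((τ' : ℝ) : ℂ))))
      (Complex.exp (-(Complex.I * (τ : ℂ))) * (-Complex.I)) τ := by
    have h0 : HasDerivAt (fun τ' : ℝ => ((τ' : ℝ) : ℂ)) 1 τ := by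
      simpa using (hasDerivAt_id τ).ofReal_comp
    have h1 := ((h0.const_mul Complex.I).neg).cexp
    simpa using h1
  have hG : HasDerivAt (fun τ' => Gi t x p τ') (deriv (fun τ' => Gi t x p τ') τ) τ := by
    have := ((hGi.differentiable one_ne_zero) (t, x, p, τ)).comp (f := fun τ' => ((t, x, p, τ') : ℝ × E × E × ℝ)) τ
      ((differentiableAt_const t).prodMk ((differentiableAt_const x).prodMk
        ((differentiableAt_const p).prodMk differentiableAt_fun_id)))
    exact this.hasDerivAt
  exact (hph.mul hG).deriv


end ChainAux
/-- consistency of the nonlinear geometric optics reformulation for the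
semiclassical surface hopping model.  If the phase `S` solves
`∂_t S + p·∇ₓS + ∇ₓU·∇ₚS = 2E`, `S(0) = 0`, and the `2π`-periodic profiles
`(F⁺, F⁻, Gⁱ)` solve the augmented system, then `f^± = F^±(·,S/ε)` and
`fⁱ = e^{-iS/ε} Gⁱ(·,S/ε)` solve the surface hopping system. -/
theorem ngo_consistency_surface_hopping
    (d : ℕ) (hd : 1 ≤ d)
    (Upot Epot : EuclideanSpace ℝ (Fin d) → ℝ)
    (hU : ContDiff ℝ 1 Upot) (hEc : ContDiff ℝ 1 Epot)
    (bi bp bm : EuclideanSpace ℝ (Fin d) → EuclideanSpace ℝ (Fin d) → ℂ)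
    (hbi : Continuous fun q : EuclideanSpace ℝ (Fin d) × EuclideanSpace ℝ (Fin d) =>
      bi q.1 q.2)
    (hbp : Continuous fun q : EuclideanSpace ℝ (Fin d) × EuclideanSpace ℝ (Fin d) =>
      bp q.1 q.2)
    (hbm : Continuous fun q : EuclideanSpace ℝ (Fin d) × EuclideanSpace ℝ (Fin d) =>
      bm q.1 q.2)
    (ε : ℝ) (hε : 0 < ε)
    (fpin fmin fiin : EuclideanSpace ℝ (Fin d) → EuclideanSpace ℝ (Fin d) → ℂ)
    (S : ℝ → EuclideanSpace ℝ (Fin d) → EuclideanSpace ℝ (Fin d) → ℝ)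
    (hS : ContDiff ℝ 1
      (fun q : ℝ × EuclideanSpace ℝ (Fin d) × EuclideanSpace ℝ (Fin d) =>
        S q.1 q.2.1 q.2.2))
    (hSeq : ∀ t x p,
      deriv (fun t' => S t' x p) t + (fderiv ℝ (fun x' => S t x' p) x) p
        + ⟪gradient Upot x, gradient (fun p' => S t x p') p⟫
        = 2 * Epot x)
    (hS0 : ∀ x p, S 0 x p = 0)
    (Fp Fm Gi : ℝ → EuclideanSpace ℝ (Fin d) → EuclideanSpace ℝ (Fin d) → ℝ → ℂ)
    (hFp : ContDiff ℝ 1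
      (fun q : ℝ × EuclideanSpace ℝ (Fin d) × EuclideanSpace ℝ (Fin d) × ℝ =>
        Fp q.1 q.2.1 q.2.2.1 q.2.2.2))
    (hFm : ContDiff ℝ 1
      (fun q : ℝ × EuclideanSpace ℝ (Fin d) × EuclideanSpace ℝ (Fin d) × ℝ =>
        Fm q.1 q.2.1 q.2.2.1 q.2.2.2))
    (hGi : ContDiff ℝ 1
      (fun q : ℝ × EuclideanSpace ℝ (Fin d) × EuclideanSpace ℝ (Fin d) × ℝ =>
        Gi q.1 q.2.1 q.2.2.1 q.2.2.2))
    (hFpper : ∀ t x p τ, Fp t x p (τ + 2 * Real.pi) = Fp t x p τ)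
    (hFmper : ∀ t x p τ, Fm t x p (τ + 2 * Real.pi) = Fm t x p τ)
    (hGiper : ∀ t x p τ, Gi t x p (τ + 2 * Real.pi) = Gi t x p τ)
    (hFpeq : ∀ t x p (τ : ℝ),
      deriv (fun t' => Fp t' x p τ) t + (fderiv ℝ (fun x' => Fp t x' p τ) x) p
        - (fderiv ℝ (fun p' => Fp t x p' τ) p) (gradient (fun y => Upot y + Epot y) x)
        = -(((2 * Epot x
              - ⟪gradient (fun y => 2 * Upot y + Epot y) x,
                  gradient (fun p' => S t x p') p⟫) / ε : ℝ) : ℂ)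
              * deriv (fun τ' => Fp t x p τ') τ
          + conj (bi x p) * Complex.exp (-(Complex.I * τ)) * Gi t x p τ
          + bi x p * Complex.exp (Complex.I * τ) * conj (Gi t x p τ))
    (hFmeq : ∀ t x p (τ : ℝ),
      deriv (fun t' => Fm t' x p τ) t + (fderiv ℝ (fun x' => Fm t x' p τ) x) p
        - (fderiv ℝ (fun p' => Fm t x p' τ) p) (gradient (fun y => Upot y - Epot y) x)
        = -(((2 * Epot x
              - ⟪gradient (fun y => 2 * Upot y - Epot y) x,
                  gradient (fun p' => S t x p') p⟫) / ε : ℝ) : ℂ)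
              * deriv (fun τ' => Fm t x p τ') τ
          - conj (bi x p) * Complex.exp (-(Complex.I * τ)) * Gi t x p τ
          - bi x p * Complex.exp (Complex.I * τ) * conj (Gi t x p τ))
    (hGieq : ∀ t x p (τ : ℝ),
      deriv (fun t' => Gi t' x p τ) t + (fderiv ℝ (fun x' => Gi t x' p τ) x) p
        + (fderiv ℝ (fun p' => Gi t x p' τ) p) (gradient Upot x)
        = -((2 * Epot x / ε : ℝ) : ℂ) * deriv (fun τ' => Gi t x p τ') τ
          + bi x p * Complex.exp (Complex.I * τ) * (Fm t x p τ - Fp t x p τ)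
          + (bp x p - bm x p) * Gi t x p τ)
    (hFp0 : ∀ x p, Fp 0 x p 0 = fpin x p)
    (hFm0 : ∀ x p, Fm 0 x p 0 = fmin x p)
    (hGi0 : ∀ x p, Gi 0 x p 0 = fiin x p) :
    let fp : ℝ → EuclideanSpace ℝ (Fin d) → EuclideanSpace ℝ (Fin d) → ℂ :=
      fun t x p => Fp t x p (S t x p / ε)
    let fm : ℝ → EuclideanSpace ℝ (Fin d) → EuclideanSpace ℝ (Fin d) → ℂ :=
      fun t x p => Fm t x p (S t x p / ε)
    let fi : ℝ → EuclideanSpace ℝ (Fin d) → EuclideanSpace ℝ (Fin d) → ℂ :=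
      fun t x p =>
        Complex.exp (-(Complex.I * ((S t x p / ε : ℝ) : ℂ))) * Gi t x p (S t x p / ε)
    (∀ t x p,
      deriv (fun t' => fp t' x p) t + (fderiv ℝ (fun x' => fp t x' p) x) p
        - (fderiv ℝ (fun p' => fp t x p') p) (gradient (fun y => Upot y + Epot y) x)
        = conj (bi x p) * fi t x p + bi x p * conj (fi t x p)) ∧
    (∀ t x p,
      deriv (fun t' => fm t' x p) t + (fderiv ℝ (fun x' => fm t x' p) x) p
        - (fderiv ℝ (fun p' => fm t x p') p) (gradient (fun y => Upot y - Epot y) x)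
        = -(conj (bi x p) * fi t x p) - bi x p * conj (fi t x p)) ∧
    (∀ t x p,
      deriv (fun t' => fi t' x p) t + (fderiv ℝ (fun x' => fi t x' p) x) p
        + (fderiv ℝ (fun p' => fi t x p') p) (gradient Upot x)
        = -(2 * Complex.I * (Epot x : ℂ) / (ε : ℂ)) * fi t x p
          + bi x p * (fm t x p - fp t x p)
          + (bp x p - bm x p) * fi t x p) ∧
    (∀ x p, fp 0 x p = fpin x p ∧ fm 0 x p = fmin x p ∧ fi 0 x p = fiin x p) := by
  intro fp fm fi
  have hUd : Differentiable ℝ Upot := hU.differentiable one_ne_zero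
  have hEd : Differentiable ℝ Epot := hEc.differentiable one_ne_zero
  refine ⟨fun t x p => ?_, fun t x p => ?_, fun t x p => ?_, fun x p => ?_⟩
  · -- F⁺ equation
    show deriv (fun t' => Fp t' x p (S t' x p / ε)) t
        + (fderiv ℝ (fun x' => Fp t x' p (S t x' p / ε)) x) p
        - (fderiv ℝ (fun p' => Fp t x p' (S t x p' / ε)) p)
            (gradient (fun y => Upot y + Epot y) x)
      = conj (bi x p)
          * (Complex.exp (-(Complex.I * ((S t x p / ε : ℝ) : ℂ))) * Gi t x p (S t x p / ε))
        + bi x p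
          * conj (Complex.exp (-(Complex.I * ((S t x p / ε : ℝ) : ℂ))) * Gi t x p (S t x p / ε))
    rw [ngoSH_chain_t Fp hFp S hS ε t x p,
      ngoSH_chain_x Fp hFp S hS ε t x p p (ngoSH_diff_x S hS t x p),
      ngoSH_chain_p Fp hFp S hS ε t x p (gradient (fun y => Upot y + Epot y) x)
        (ngoSH_diff_p S hS t x p)]
    have e1 : fderiv ℝ (fun p' => S t x p') p (gradient (fun y => Upot y + Epot y) x)
        = fderiv ℝ (fun y => Upot y + Epot y) x (gradient (fun p' => S t x p') p) := by
      rw [ngoSH_fderiv_inner, real_inner_comm]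
      exact (ngoSH_fderiv_inner _ _ _).symm
    have e2 : (⟪gradient (fun y => 2 * Upot y + Epot y) x, gradient (fun p' => S t x p') p⟫ : ℝ)
        = fderiv ℝ (fun y => 2 * Upot y + Epot y) x (gradient (fun p' => S t x p') p) :=
      (ngoSH_fderiv_inner _ _ _).symm
    have e3 : (⟪gradient Upot x, gradient (fun p' => S t x p') p⟫ : ℝ)
        = fderiv ℝ Upot x (gradient (fun p' => S t x p') p) :=
      (ngoSH_fderiv_inner _ _ _).symm
    have e4 : fderiv ℝ (fun y => Upot y + Epot y) x (gradient (fun p' => S t x p') p)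
        = fderiv ℝ Upot x (gradient (fun p' => S t x p') p)
          + fderiv ℝ Epot x (gradient (fun p' => S t x p') p) := by
      rw [fderiv_fun_add (hUd x) (hEd x)]; simp
    have e5 : fderiv ℝ (fun y => 2 * Upot y + Epot y) x (gradient (fun p' => S t x p') p)
        = 2 * fderiv ℝ Upot x (gradient (fun p' => S t x p') p)
          + fderiv ℝ Epot x (gradient (fun p' => S t x p') p) := by
      rw [fderiv_fun_add ((hUd x).const_mul 2) (hEd x), fderiv_const_mul (hUd x) 2]; simp
    have hE3 := hSeq t x p
    rw [e3] at hE3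
    have hkey : deriv (fun t' => S t' x p) t + fderiv ℝ (fun x' => S t x' p) x p
        - fderiv ℝ (fun p' => S t x p') p (gradient (fun y => Upot y + Epot y) x)
        = 2 * Epot x
          - ⟪gradient (fun y => 2 * Upot y + Epot y) x, gradient (fun p' => S t x p') p⟫ := by
      rw [e1, e4, e2, e5]; linarith
    have hFp' := hFpeq t x p (S t x p / ε)
    have hkeyC : ((deriv (fun t' => S t' x p) t + fderiv ℝ (fun x' => S t x' p) x p
        - fderiv ℝ (fun p' => S t x p') p (gradient (fun y => Upot y + Epot y) x) : ℝ) : ℂ)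
        = ((2 * Epot x
            - ⟪gradient (fun y => 2 * Upot y + Epot y) x, gradient (fun p' => S t x p') p⟫
              : ℝ) : ℂ) := by
      exact_mod_cast congrArg Complex.ofReal hkey
    have hconj : conj (Complex.exp (-(Complex.I * ((S t x p / ε : ℝ) : ℂ)))
          * Gi t x p (S t x p / ε))
        = Complex.exp (Complex.I * ((S t x p / ε : ℝ) : ℂ)) * conj (Gi t x p (S t x p / ε)) := by
      rw [map_mul, ← Complex.exp_conj]
      simp [Complex.conj_I, Complex.conj_ofReal]
    rw [hconj]
    push_cast at hFp' hkeyC ⊢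
    linear_combination hFp'
      + (deriv (fun τ' => Fp t x p τ') (S t x p / ε) / (ε : ℂ)) * hkeyC
  · -- F⁻ equation
    show deriv (fun t' => Fm t' x p (S t' x p / ε)) t
        + (fderiv ℝ (fun x' => Fm t x' p (S t x' p / ε)) x) p
        - (fderiv ℝ (fun p' => Fm t x p' (S t x p' / ε)) p)
            (gradient (fun y => Upot y - Epot y) x)
      = -(conj (bi x p)
          * (Complex.exp (-(Complex.I * ((S t x p / ε : ℝ) : ℂ))) * Gi t x p (S t x p / ε)))
        - bi x p
          * conj (Complex.exp (-(Complex.I * ((S t x p / ε : ℝ) : ℂ))) * Gi t x p (S t x p / ε))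
    rw [ngoSH_chain_t Fm hFm S hS ε t x p,
      ngoSH_chain_x Fm hFm S hS ε t x p p (ngoSH_diff_x S hS t x p),
      ngoSH_chain_p Fm hFm S hS ε t x p (gradient (fun y => Upot y - Epot y) x)
        (ngoSH_diff_p S hS t x p)]
    have e1 : fderiv ℝ (fun p' => S t x p') p (gradient (fun y => Upot y - Epot y) x)
        = fderiv ℝ (fun y => Upot y - Epot y) x (gradient (fun p' => S t x p') p) := by
      rw [ngoSH_fderiv_inner, real_inner_comm]
      exact (ngoSH_fderiv_inner _ _ _).symm
    have e2 : (⟪gradient (fun y => 2 * Upot y - Epot y) x, gradient (fun p' => S t x p') p⟫ : ℝ)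
        = fderiv ℝ (fun y => 2 * Upot y - Epot y) x (gradient (fun p' => S t x p') p) :=
      (ngoSH_fderiv_inner _ _ _).symm
    have e3 : (⟪gradient Upot x, gradient (fun p' => S t x p') p⟫ : ℝ)
        = fderiv ℝ Upot x (gradient (fun p' => S t x p') p) :=
      (ngoSH_fderiv_inner _ _ _).symm
    have e4 : fderiv ℝ (fun y => Upot y - Epot y) x (gradient (fun p' => S t x p') p)
        = fderiv ℝ Upot x (gradient (fun p' => S t x p') p)
          - fderiv ℝ Epot x (gradient (fun p' => S t x p') p) := by
      rw [fderiv_fun_sub (hUd x) (hEd x)]; simp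
    have e5 : fderiv ℝ (fun y => 2 * Upot y - Epot y) x (gradient (fun p' => S t x p') p)
        = 2 * fderiv ℝ Upot x (gradient (fun p' => S t x p') p)
          - fderiv ℝ Epot x (gradient (fun p' => S t x p') p) := by
      rw [fderiv_fun_sub ((hUd x).const_mul 2) (hEd x), fderiv_const_mul (hUd x) 2]; simp
    have hE3 := hSeq t x p
    rw [e3] at hE3
    have hkey : deriv (fun t' => S t' x p) t + fderiv ℝ (fun x' => S t x' p) x p
        - fderiv ℝ (fun p' => S t x p') p (gradient (fun y => Upot y - Epot y) x)
        = 2 * Epot x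
          - ⟪gradient (fun y => 2 * Upot y - Epot y) x, gradient (fun p' => S t x p') p⟫ := by
      rw [e1, e4, e2, e5]; linarith
    have hFm' := hFmeq t x p (S t x p / ε)
    have hkeyC : ((deriv (fun t' => S t' x p) t + fderiv ℝ (fun x' => S t x' p) x p
        - fderiv ℝ (fun p' => S t x p') p (gradient (fun y => Upot y - Epot y) x) : ℝ) : ℂ)
        = ((2 * Epot x
            - ⟪gradient (fun y => 2 * Upot y - Epot y) x, gradient (fun p' => S t x p') p⟫
              : ℝ) : ℂ) := by
      exact_mod_cast congrArg Complex.ofReal hkey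
    have hconj : conj (Complex.exp (-(Complex.I * ((S t x p / ε : ℝ) : ℂ)))
          * Gi t x p (S t x p / ε))
        = Complex.exp (Complex.I * ((S t x p / ε : ℝ) : ℂ)) * conj (Gi t x p (S t x p / ε)) := by
      rw [map_mul, ← Complex.exp_conj]
      simp [Complex.conj_I, Complex.conj_ofReal]
    rw [hconj]
    push_cast at hFm' hkeyC ⊢
    linear_combination hFm'
      + (deriv (fun τ' => Fm t x p τ') (S t x p / ε) / (ε : ℂ)) * hkeyC
  · -- Gⁱ equation
    have hGi2 : ContDiff ℝ 1
        (fun q : ℝ × EuclideanSpace ℝ (Fin d) × EuclideanSpace ℝ (Fin d) × ℝ =>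
          Complex.exp (-(Complex.I * ((q.2.2.2 : ℝ) : ℂ))) * Gi q.1 q.2.1 q.2.2.1 q.2.2.2) :=
      ngoSH_phase_contDiff Gi hGi
    show deriv (fun t' => Complex.exp (-(Complex.I * ((S t' x p / ε : ℝ) : ℂ)))
          * Gi t' x p (S t' x p / ε)) t
        + (fderiv ℝ (fun x' => Complex.exp (-(Complex.I * ((S t x' p / ε : ℝ) : ℂ)))
            * Gi t x' p (S t x' p / ε)) x) p
        + (fderiv ℝ (fun p' => Complex.exp (-(Complex.I * ((S t x p' / ε : ℝ) : ℂ)))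
            * Gi t x p' (S t x p' / ε)) p) (gradient Upot x)
      = -(2 * Complex.I * (Epot x : ℂ) / (ε : ℂ))
          * (Complex.exp (-(Complex.I * ((S t x p / ε : ℝ) : ℂ))) * Gi t x p (S t x p / ε))
        + bi x p * (Fm t x p (S t x p / ε) - Fp t x p (S t x p / ε))
        + (bp x p - bm x p)
          * (Complex.exp (-(Complex.I * ((S t x p / ε : ℝ) : ℂ))) * Gi t x p (S t x p / ε))
    have c1 : deriv (fun t' => Complex.exp (-(Complex.I * ((S t' x p / ε : ℝ) : ℂ)))
          * Gi t' x p (S t' x p / ε)) t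
        = deriv (fun t' => Complex.exp (-(Complex.I * ((S t x p / ε : ℝ) : ℂ)))
            * Gi t' x p (S t x p / ε)) t
          + ((deriv (fun t' => S t' x p) t / ε : ℝ) : ℂ)
            * deriv (fun τ' => Complex.exp (-(Complex.I * ((τ' : ℝ) : ℂ))) * Gi t x p τ')
                (S t x p / ε) :=
      ngoSH_chain_t (fun t x p τ => Complex.exp (-(Complex.I * (τ : ℂ))) * Gi t x p τ)
        hGi2 S hS ε t x p
    have c2 : (fderiv ℝ (fun x' => Complex.exp (-(Complex.I * ((S t x' p / ε : ℝ) : ℂ)))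
          * Gi t x' p (S t x' p / ε)) x) p
        = (fderiv ℝ (fun x' => Complex.exp (-(Complex.I * ((S t x p / ε : ℝ) : ℂ)))
            * Gi t x' p (S t x p / ε)) x) p
          + ((fderiv ℝ (fun x' => S t x' p) x p / ε : ℝ) : ℂ)
            * deriv (fun τ' => Complex.exp (-(Complex.I * ((τ' : ℝ) : ℂ))) * Gi t x p τ')
                (S t x p / ε) :=
      ngoSH_chain_x (fun t x p τ => Complex.exp (-(Complex.I * (τ : ℂ))) * Gi t x p τ)
        hGi2 S hS ε t x p p (ngoSH_diff_x S hS t x p)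
    have c3 : (fderiv ℝ (fun p' => Complex.exp (-(Complex.I * ((S t x p' / ε : ℝ) : ℂ)))
          * Gi t x p' (S t x p' / ε)) p) (gradient Upot x)
        = (fderiv ℝ (fun p' => Complex.exp (-(Complex.I * ((S t x p / ε : ℝ) : ℂ)))
            * Gi t x p' (S t x p / ε)) p) (gradient Upot x)
          + ((fderiv ℝ (fun p' => S t x p') p (gradient Upot x) / ε : ℝ) : ℂ)
            * deriv (fun τ' => Complex.exp (-(Complex.I * ((τ' : ℝ) : ℂ))) * Gi t x p τ')
                (S t x p / ε) :=
      ngoSH_chain_p (fun t x p τ => Complex.exp (-(Complex.I * (τ : ℂ))) * Gi t x p τ)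
        hGi2 S hS ε t x p (gradient Upot x) (ngoSH_diff_p S hS t x p)
    rw [c1, c2, c3, ngoSH_phase_deriv_t Gi hGi t x p (S t x p / ε),
      ngoSH_phase_fderiv_x Gi hGi t x p (S t x p / ε) p,
      ngoSH_phase_fderiv_p Gi hGi t x p (S t x p / ε) (gradient Upot x),
      ngoSH_phase_deriv_tau Gi hGi t x p (S t x p / ε)]
    have e1 : fderiv ℝ (fun p' => S t x p') p (gradient Upot x)
        = ⟪gradient Upot x, gradient (fun p' => S t x p') p⟫ := by
      rw [ngoSH_fderiv_inner, real_inner_comm]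
    have hkey : deriv (fun t' => S t' x p) t + fderiv ℝ (fun x' => S t x' p) x p
        + fderiv ℝ (fun p' => S t x p') p (gradient Upot x) = 2 * Epot x := by
      rw [e1]; exact hSeq t x p
    have hGi' := hGieq t x p (S t x p / ε)
    have hkeyC : ((deriv (fun t' => S t' x p) t + fderiv ℝ (fun x' => S t x' p) x p
        + fderiv ℝ (fun p' => S t x p') p (gradient Upot x) : ℝ) : ℂ)
        = ((2 * Epot x : ℝ) : ℂ) := by
      exact_mod_cast congrArg Complex.ofReal hkey
    have hexp : Complex.exp (-(Complex.I * ((S t x p / ε : ℝ) : ℂ)))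
        * Complex.exp (Complex.I * ((S t x p / ε : ℝ) : ℂ)) = 1 := by
      rw [← Complex.exp_add]; simp
    push_cast at hGi' hkeyC hexp ⊢
    linear_combination
      Complex.exp (-(Complex.I * ((S t x p : ℂ) / (ε : ℂ)))) * hGi'
      + ((-Complex.I * Gi t x p (S t x p / ε) + deriv (fun τ' => Gi t x p τ') (S t x p / ε))
          * Complex.exp (-(Complex.I * ((S t x p : ℂ) / (ε : ℂ)))) / (ε : ℂ)) * hkeyC
      + (bi x p * (Fm t x p (S t x p / ε) - Fp t x p (S t x p / ε))) * hexp
  · -- initial data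
    refine ⟨?_, ?_, ?_⟩
    · show Fp 0 x p (S 0 x p / ε) = fpin x p
      rw [hS0, zero_div, hFp0]
    · show Fm 0 x p (S 0 x p / ε) = fmin x p
      rw [hS0, zero_div, hFm0]
    · show Complex.exp (-(Complex.I * ((S 0 x p / ε : ℝ) : ℂ))) * Gi 0 x p (S 0 x p / ε)
        = fiin x p
      rw [hS0, zero_div]
      simp [hGi0]
end
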